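/- If A is a 3×3 normal tropical real matrix, then any tropical linear combination of the columns of A^⊙2 with real coefficients is a fixed point of x ↦ A ⊙ x: for all λ₁, λ₂, λ₃ ∈ ℝ, if x_i = max_j (λ_j + (A^⊙2)_{ij}), then A ⊙ x = x. -/
import Mathlib


/-- Tropical (max,+) product of 3×3 real matrices. -/
def tmul (A B : Fin 3 → Fin 3 → ℝ) : Fin 3 → Fin 3 → ℝ :=
  fun i j => max (A i 0 + B 0 j) (max (A i 1 + B 1 j) (A i 2 + B 2 j))

/-- Tropical (max,+) matrix–vector product. -/
def tvec (A : Fin 3 → Fin 3 → ℝ) (x : Fin 3 → ℝ) : Fin 3 → ℝ :=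
  fun i => max (A i 0 + x 0) (max (A i 1 + x 1) (A i 2 + x 2))

/-- A 3×3 real matrix is normal if its diagonal is 0 and all entries are ≤ 0. -/
def IsNormal (A : Fin 3 → Fin 3 → ℝ) : Prop :=
  (∀ i, A i i = 0) ∧ ∀ i j, A i j ≤ 0

/-- The index of `Fin 3` distinct from both `i` and `j` (when `i ≠ j`). -/
def otherIdx (i j : Fin 3) : Fin 3 := ⟨(6 - i.val - j.val) % 3, Nat.mod_lt _ (by norm_num)⟩

/-- The matrix Ă: zero diagonal, and β_{ij} = a_{ik} + a_{kj} for i ≠ j, k the third index. -/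
def breve (A : Fin 3 → Fin 3 → ℝ) : Fin 3 → Fin 3 → ℝ :=
  fun i j => if i = j then 0 else A i (otherIdx i j) + A (otherIdx i j) j

lemma pick3 (f : Fin 3 → ℝ) (i : Fin 3) : f i ≤ max (f 0) (max (f 1) (f 2)) := by
  fin_cases i
  · exact le_max_left _ _
  · exact le_max_of_le_right (le_max_left _ _)
  · exact le_max_of_le_right (le_max_right _ _)

lemma trip (A : Fin 3 → Fin 3 → ℝ) (hA : IsNormal A) (i k l j : Fin 3) :
    A i k + (A k l + A l j) ≤ tmul A A i j := by
  obtain ⟨hd, hn⟩ := hA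
  have P : ∀ m : Fin 3, A i m + A m j ≤ tmul A A i j := fun m =>
    pick3 (fun m => A i m + A m j) m
  by_cases hkl : k = l
  · subst hkl; have := hd k; have := P k; linarith
  by_cases hik : i = k
  · subst hik; have := hd i; have := P l; linarith
  by_cases hlj : l = j
  · subst hlj; have := hd l; have := P k; linarith
  by_cases hij : i = j
  · subst hij
    have := hd i; have := P i
    have := hn i k; have := hn k l; have := hn l i
    linarith
  by_cases hil : i = l
  · subst hil
    have := hd i; have := P i
    have := hn i k; have := hn k i
    linarith
  by_cases hkj : k = j
  · subst hkj
    have := hd i; have := P i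
    have := hn k l; have := hn l k
    linarith
  · exfalso
    simp only [Fin.ext_iff] at hkl hik hlj hij hil hkj
    have := i.isLt; have := k.isLt; have := l.isLt; have := j.isLt
    omega

lemma key (A : Fin 3 → Fin 3 → ℝ) (hA : IsNormal A) (i j k : Fin 3) :
    A i j + tmul A A j k ≤ tmul A A i k := by
  have h0 := trip A hA i j 0 k
  have h1 := trip A hA i j 1 k
  have h2 := trip A hA i j 2 k
  have : A i j + tmul A A j k =
      max (A i j + (A j 0 + A 0 k)) (max (A i j + (A j 1 + A 1 k)) (A i j + (A j 2 + A 2 k))) := by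
    simp only [tmul]
    rw [max_add_add_left, max_add_add_left]
  rw [this]
  exact max_le h0 (max_le h1 h2)

theorem stmt12 (A : Fin 3 → Fin 3 → ℝ) (hA : IsNormal A)
    (l1 l2 l3 : ℝ) :
    tvec A (fun i => max (l1 + tmul A A i 0) (max (l2 + tmul A A i 1) (l3 + tmul A A i 2))) =
      fun i => max (l1 + tmul A A i 0) (max (l2 + tmul A A i 1) (l3 + tmul A A i 2)) := by
  set x : Fin 3 → ℝ :=
    fun i => max (l1 + tmul A A i 0) (max (l2 + tmul A A i 1) (l3 + tmul A A i 2)) with hxdef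
  have hx : ∀ i j : Fin 3, A i j + x j ≤ x i := by
    intro i j
    have k0 := key A hA i j 0
    have k1 := key A hA i j 1
    have k2 := key A hA i j 2
    have e : A i j + x j =
        max (A i j + (l1 + tmul A A j 0))
          (max (A i j + (l2 + tmul A A j 1)) (A i j + (l3 + tmul A A j 2))) := by
      rw [hxdef]
      rw [max_add_add_left, max_add_add_left]
    rw [e, hxdef]
    refine max_le ?_ (max_le ?_ ?_)
    · exact le_max_of_le_left (by linarith)
    · exact le_max_of_le_right (le_max_of_le_left (by linarith))
    · exact le_max_of_le_right (le_max_of_le_right (by linarith))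
  funext i
  refine le_antisymm ?_ ?_
  · exact max_le (hx i 0) (max_le (hx i 1) (hx i 2))
  · have hp : A i i + x i ≤ tvec A x i := pick3 (fun j => A i j + x j) i
    have := hA.1 i
    calc x i = A i i + x i := by rw [this]; ring
    _ ≤ tvec A x i := hp
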